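/- Let M be a matroid on finite ground set E and let S be a random subset sampling each element independently with probability δ. Define P = { e ∈ S : e ∉ span(S − e) }. If E[|span(S)|] ≤ ε|E|, then E[|S \ P|] ≤ δ ε |E| = ε E[|S|]. -/
import Mathlib


open scoped Classical
open Finset

/-- A matroid on a finite ground set `E`: a nonempty downward-closed family of
independent sets satisfying the exchange (augmentation) property. -/
structure FinMatroid (E : Type*) [DecidableEq E] [Fintype E] where
  Indep : Finset E → Prop
  empty_indep : Indep ∅
  subset_indep : ∀ ⦃S T : Finset E⦄, S ⊆ T → Indep T → Indep S
  exchange : ∀ ⦃S T : Finset E⦄, Indep S → Indep T → S.card < T.card →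
      ∃ e ∈ T \ S, Indep (insert e S)

variable {E : Type*} [DecidableEq E] [Fintype E]

/-- The rank of a set `S`: the (common, maximal) cardinality of maximal
independent subsets of `S`. -/
noncomputable def FinMatroid.rank (M : FinMatroid E) (S : Finset E) : ℕ :=
  (S.powerset.filter (fun I => M.Indep I)).sup Finset.card

/-- The span of a set `S`: the elements that do not increase the rank of `S`. -/
noncomputable def FinMatroid.span (M : FinMatroid E) (S : Finset E) : Finset E :=
  Finset.univ.filter (fun e => M.rank (insert e S) = M.rank S)

/-- The probability that an independent `δ`-sample of the ground set equals `s`. -/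
noncomputable def sampleWeight (δ : ℝ) (s : Finset E) : ℝ :=
  δ ^ s.card * (1 - δ) ^ (Fintype.card E - s.card)

section Aux
variable {α : Type*} [DecidableEq α]

lemma sum_binom_one (δ : ℝ) (u : Finset α) :
    ∑ t ∈ u.powerset, δ ^ t.card * (1 - δ) ^ (u.card - t.card) = 1 := by
  have h := Finset.prod_add (fun _ : α => δ) (fun _ => (1:ℝ) - δ) u
  simp only [Finset.prod_const] at h
  have h2 : ∑ t ∈ u.powerset, δ ^ t.card * (1 - δ) ^ (u.card - t.card)
      = ∑ t ∈ u.powerset, δ ^ t.card * (1 - δ) ^ (u \ t).card := by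
    refine Finset.sum_congr rfl fun t ht => ?_
    rw [Finset.card_sdiff_of_subset (Finset.mem_powerset.mp ht)]
  rw [h2, ← h]
  norm_num

lemma split_sum [Fintype α] (e : α) (F : Finset α → ℝ) :
    ∑ s : Finset α, F s
      = ∑ t ∈ (Finset.univ.erase e).powerset, (F t + F (insert e t)) := by
  have h1 : (Finset.univ : Finset α) = insert e (Finset.univ.erase e) :=
    (Finset.insert_erase (Finset.mem_univ e)).symm
  calc ∑ s : Finset α, F s = ∑ s ∈ (Finset.univ : Finset α).powerset, F s := by
        rw [Finset.powerset_univ]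
    _ = ∑ t ∈ (Finset.univ.erase e).powerset, F t
        + ∑ t ∈ (Finset.univ.erase e).powerset, F (insert e t) := by
        conv_lhs => rw [h1]
        rw [Finset.sum_powerset_insert (Finset.notMem_erase e _)]
    _ = _ := (Finset.sum_add_distrib).symm

end Aux

lemma mem_span_insert_self (M : FinMatroid E) (e : E) (t : Finset E) :
    e ∈ M.span (insert e t) := by
  simp [FinMatroid.span, Finset.insert_idem]


set_option maxHeartbeats 1000000 in
/-- claim (b) in the analysis of greedy sampling: with `S` an
independent `δ`-sample and `P = {e ∈ S : e ∉ span(S − e)}`, if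
`E[|span(S)|] ≤ ε|E|` then `E[|S \ P|] ≤ δε|E| = ε E[|S|]`. -/
theorem greedy_sample_prune (M : FinMatroid E) (ε δ : ℝ)
    (hε : 0 ≤ ε) (hδ0 : 0 ≤ δ) (hδ1 : δ ≤ 1)
    (hyp : ∑ s : Finset E, sampleWeight δ s * ((M.span s).card : ℝ) ≤
      ε * (Fintype.card E : ℝ)) :
    (∑ s : Finset E, sampleWeight δ s *
        (((s \ s.filter (fun e : E => e ∉ M.span (s.erase e))).card : ℝ)) ≤
      δ * ε * (Fintype.card E : ℝ)) ∧
    δ * ε * (Fintype.card E : ℝ) = ε * ∑ s : Finset E, sampleWeight δ s * (s.card : ℝ) := by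
  set n := Fintype.card E with hn
  set ν : Finset E → ℝ := fun t => δ ^ t.card * (1 - δ) ^ (n - 1 - t.card) with hν
  have hν0 : ∀ t, 0 ≤ ν t := fun t =>
    mul_nonneg (pow_nonneg hδ0 _) (pow_nonneg (by linarith) _)
  -- basic facts about t ⊆ univ.erase e
  have hcard_erase : ∀ e : E, (Finset.univ.erase e).card = n - 1 := fun e => by
    rw [Finset.card_erase_of_mem (Finset.mem_univ e), Finset.card_univ]
  have hn1 : ∀ _ : E, 1 ≤ n := fun e => Fintype.card_pos_iff.mpr ⟨e⟩
  have hfacts : ∀ (e : E) (t : Finset E), t ∈ (Finset.univ.erase e).powerset →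
      e ∉ t ∧ t.card ≤ n - 1 := by
    intro e t ht
    have hsub := Finset.mem_powerset.mp ht
    refine ⟨fun hmem => Finset.notMem_erase e _ (hsub hmem), ?_⟩
    calc t.card ≤ (Finset.univ.erase e).card := Finset.card_le_card hsub
      _ = n - 1 := hcard_erase e
  -- weight computations
  have w_insert : ∀ (e : E) (t : Finset E), e ∉ t → t.card ≤ n - 1 →
      sampleWeight δ (insert e t) = δ * ν t := by
    intro e t het hc
    have h1 : (insert e t).card = t.card + 1 := Finset.card_insert_of_notMem het
    have h2 : n - (t.card + 1) = n - 1 - t.card := by omega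
    simp only [sampleWeight, h1, ← hn, h2, hν, pow_succ]
    ring
  have w_self : ∀ (e : E) (t : Finset E), t.card ≤ n - 1 →
      sampleWeight δ t = (1 - δ) * ν t := by
    intro e t hc
    have h2 : n - t.card = (n - 1 - t.card) + 1 := by have := hn1 e; omega
    simp only [sampleWeight, ← hn, h2, hν, pow_succ]
    ring
  -- per-element sum of ν is 1
  have hν1 : ∀ e : E, ∑ t ∈ (Finset.univ.erase e).powerset, ν t = 1 := by
    intro e
    have := sum_binom_one δ (Finset.univ.erase e)
    rw [hcard_erase e] at this
    exact this
  -- Lemma E: expected indicator of membership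
  have lemE : ∀ e : E,
      (∑ s : Finset E, sampleWeight δ s * (if e ∈ s then (1:ℝ) else 0)) = δ := by
    intro e
    rw [split_sum e]
    have : ∀ t ∈ (Finset.univ.erase e).powerset,
        (sampleWeight δ t * (if e ∈ t then (1:ℝ) else 0)
          + sampleWeight δ (insert e t) * (if e ∈ insert e t then (1:ℝ) else 0))
        = δ * ν t := by
      intro t ht
      obtain ⟨het, hc⟩ := hfacts e t ht
      rw [if_neg het, if_pos (Finset.mem_insert_self e t), w_insert e t het hc]
      ring
    rw [Finset.sum_congr rfl this, ← Finset.mul_sum, hν1 e, mul_one]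
  -- Lemma C: expected indicator of e ∈ s ∧ e ∈ span(s − e)
  have lemC : ∀ e : E,
      (∑ s : Finset E, sampleWeight δ s *
        (if e ∈ s ∧ e ∈ M.span (s.erase e) then (1:ℝ) else 0))
      = δ * ∑ t ∈ (Finset.univ.erase e).powerset,
          ν t * (if e ∈ M.span t then (1:ℝ) else 0) := by
    intro e
    rw [split_sum e, Finset.mul_sum]
    refine Finset.sum_congr rfl fun t ht => ?_
    obtain ⟨het, hc⟩ := hfacts e t ht
    rw [if_neg (by tauto), w_insert e t het hc, Finset.erase_insert het]
    have : (if e ∈ insert e t ∧ e ∈ M.span t then (1:ℝ) else 0)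
        = (if e ∈ M.span t then (1:ℝ) else 0) := by
      by_cases h : e ∈ M.span t <;> simp [h, Finset.mem_insert_self]
    rw [this]
    ring
  -- Lemma D: comparison with the span indicator
  have lemD : ∀ e : E,
      (∑ t ∈ (Finset.univ.erase e).powerset,
          ν t * (if e ∈ M.span t then (1:ℝ) else 0))
      ≤ ∑ s : Finset E, sampleWeight δ s * (if e ∈ M.span s then (1:ℝ) else 0) := by
    intro e
    rw [split_sum e (fun s => sampleWeight δ s * (if e ∈ M.span s then (1:ℝ) else 0))]
    refine Finset.sum_le_sum fun t ht => ?_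
    obtain ⟨het, hc⟩ := hfacts e t ht
    rw [w_insert e t het hc, w_self e t hc, if_pos (mem_span_insert_self M e t)]
    have h0 := hν0 t
    by_cases h : e ∈ M.span t
    · rw [if_pos h]; nlinarith
    · rw [if_neg h]; nlinarith
  -- rewrite the pruned-set cardinality
  have card_rw : ∀ s : Finset E,
      ((s \ s.filter (fun e : E => e ∉ M.span (s.erase e))).card : ℝ)
      = ∑ e : E, (if e ∈ s ∧ e ∈ M.span (s.erase e) then (1:ℝ) else 0) := by
    intro s
    rw [Finset.sum_boole]
    congr 1
    congr 1
    ext x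
    simp only [Finset.mem_sdiff, Finset.mem_filter, Finset.mem_univ, true_and]
    tauto
  -- span cardinality as indicator sum
  have span_card : ∀ s : Finset E,
      ((M.span s).card : ℝ) = ∑ e : E, (if e ∈ M.span s then (1:ℝ) else 0) := by
    intro s
    rw [Finset.sum_boole]
    congr 1
    congr 1
    ext x
    simp
  -- s.card as indicator sum
  have s_card : ∀ s : Finset E,
      ((s.card : ℝ)) = ∑ e : E, (if e ∈ s then (1:ℝ) else 0) := by
    intro s
    rw [Finset.sum_boole]
    congr 1
    congr 1
    ext x
    simp
  constructor
  · calc ∑ s : Finset E, sampleWeight δ s *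
        (((s \ s.filter (fun e : E => e ∉ M.span (s.erase e))).card : ℝ))
        = ∑ e : E, ∑ s : Finset E, sampleWeight δ s *
            (if e ∈ s ∧ e ∈ M.span (s.erase e) then (1:ℝ) else 0) := by
          rw [Finset.sum_comm]
          exact Finset.sum_congr rfl fun s _ => by rw [card_rw s, Finset.mul_sum]
      _ = δ * ∑ e : E, ∑ t ∈ (Finset.univ.erase e).powerset,
            ν t * (if e ∈ M.span t then (1:ℝ) else 0) := by
          rw [Finset.mul_sum]
          exact Finset.sum_congr rfl fun e _ => lemC e
      _ ≤ δ * ∑ e : E, ∑ s : Finset E, sampleWeight δ s *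
            (if e ∈ M.span s then (1:ℝ) else 0) := by
          exact mul_le_mul_of_nonneg_left (Finset.sum_le_sum fun e _ => lemD e) hδ0
      _ = δ * ∑ s : Finset E, sampleWeight δ s * ((M.span s).card : ℝ) := by
          rw [Finset.sum_comm]
          congr 1
          exact Finset.sum_congr rfl fun s _ => by rw [span_card s, Finset.mul_sum]
      _ ≤ δ * (ε * (n : ℝ)) := mul_le_mul_of_nonneg_left hyp hδ0
      _ = δ * ε * (n : ℝ) := by ring
  · have : ∑ s : Finset E, sampleWeight δ s * (s.card : ℝ) = δ * (n : ℝ) := by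
      calc ∑ s : Finset E, sampleWeight δ s * (s.card : ℝ)
          = ∑ e : E, ∑ s : Finset E, sampleWeight δ s * (if e ∈ s then (1:ℝ) else 0) := by
            rw [Finset.sum_comm]
            exact Finset.sum_congr rfl fun s _ => by rw [s_card s, Finset.mul_sum]
        _ = ∑ _e : E, δ := Finset.sum_congr rfl fun e _ => lemE e
        _ = δ * (n : ℝ) := by rw [Finset.sum_const, Finset.card_univ, ← hn]; ring
    rw [this]; ring
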